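/- The quiver Γ^{10}_{1,2,3} of coloured oriented single and paired diagonals of a regular 10-gon is isomorphic as a stable translation quiver to Z E_7/⟨τ^{-10}⟩; this quotient is the Auslander–Reiten quiver of the cluster category C_{E_7} = D^b(mod kE_7)/τ^{-1}Σ, on which the shift Σ acts as τ^{-9}. -/

import Mathlib

/-!
Coloured oriented single and paired diagonals in a regular polygon, following
L. Lamberti, "Combinatorial model for the cluster categories of type E".

The vertices of the regular `m`-gon `Π` are labelled by `ZMod m` (clockwise).
A coloured oriented diagonal `[i,j]_c` is encoded by the structure `Diag`;
the colour `P` encodes a *paired* diagonal `[i,j]_P = {[i,j]_R, [j,i]_B}`.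
-/

inductive Colour : Type
  | R : Colour
  | B : Colour
  | P : Colour
deriving DecidableEq

/-- A coloured oriented (single or paired) diagonal `[i,j]_c` of the regular
`m`-gon (for `m = 0` we interpret `ZMod 0 = ℤ` as the infinite-sided polygon). -/
structure Diag (m : ℕ) where
  i : ZMod m
  j : ZMod m
  c : Colour
deriving DecidableEq

/-- The simultaneous change of colour and orientation:
`ρ([i,j]_R) = [j,i]_B`, `ρ([i,j]_B) = [j,i]_R`, `ρ([i,j]_P) = [i,j]_P`. -/
def rho {m : ℕ} : Diag m → Diag m
  | ⟨i, j, Colour.R⟩ => ⟨j, i, Colour.B⟩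
  | ⟨i, j, Colour.B⟩ => ⟨j, i, Colour.R⟩
  | ⟨i, j, Colour.P⟩ => ⟨i, j, Colour.P⟩

/-- The anticlockwise rotation `[i,j]_c ↦ [i-1,j-1]_c`. -/
def shiftD {m : ℕ} (d : Diag m) : Diag m := ⟨d.i - 1, d.j - 1, d.c⟩

/-- The slice of `Π_{r,s,t}` based at the vertex `i` of `Π`:
the paired diagonals `[i,i+2]_P, …, [i,i+r+2]_P`, the red single diagonals
`[i,i+r+3]_R, …, [i,i+r+s+2]_R` and the blue single diagonals
`[i+r+3,i]_B, …, [i+r+t+2,i]_B`. -/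
def PiSetAt (r s t : ℕ) {m : ℕ} (i : ZMod m) : Set (Diag m) :=
  {d | (∃ k : ℕ, 2 ≤ k ∧ k ≤ r + 2 ∧ d = ⟨i, i + (k : ZMod m), Colour.P⟩) ∨
       (∃ k : ℕ, r + 3 ≤ k ∧ k ≤ r + s + 2 ∧ d = ⟨i, i + (k : ZMod m), Colour.R⟩) ∨
       (∃ k : ℕ, r + 3 ≤ k ∧ k ≤ r + t + 2 ∧ d = ⟨i + (k : ZMod m), i, Colour.B⟩)}

/-- The set `Π_{r,s,t}` of coloured oriented single and paired diagonals of the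
regular `m`-gon associated to the tree `T_{r,s,t}`. -/
def PiSet (r s t m : ℕ) : Set (Diag m) := ⋃ i : ZMod m, PiSetAt r s t i

open Classical in
/-- The translation `τ` on coloured oriented diagonals: the anticlockwise
rotation `[i,j]_c ↦ [i-1,j-1]_c`, composed with `ρ^{m}` on the first slice
`Π_{r,s,t}|_1` when the tree is symmetric (`s = t`). -/
noncomputable def tauD (r s t : ℕ) {m : ℕ} (d : Diag m) : Diag m :=
  if s = t ∧ d ∈ PiSetAt r s t (1 : ZMod m) then rho^[m] (shiftD d) else shiftD d

/-- Minimal clockwise rotations (before the colour adjustment at the seam):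
`[k,l]_c → [k,l+1]_c`, `[k,l]_c → [k+1,l]_c`, together with
`[k,k+r+2]_P → [k,k+r+3]_R`, `[k,k+r+2]_P → [k+r+3,k]_B`,
`[k,k+r+3]_R → [k+1,k+r+3]_P` and `[k+r+3,k]_B → [k+1,k+r+3]_P`. -/
def Rot (r : ℕ) {m : ℕ} (a b : Diag m) : Prop :=
  b = ⟨a.i, a.j + 1, a.c⟩ ∨ b = ⟨a.i + 1, a.j, a.c⟩ ∨
  (∃ k : ZMod m, a = ⟨k, k + ((r : ZMod m) + 2), Colour.P⟩ ∧
    (b = ⟨k, k + ((r : ZMod m) + 3), Colour.R⟩ ∨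
     b = ⟨k + ((r : ZMod m) + 3), k, Colour.B⟩)) ∨
  (∃ k : ZMod m,
    (a = ⟨k, k + ((r : ZMod m) + 3), Colour.R⟩ ∨
     a = ⟨k + ((r : ZMod m) + 3), k, Colour.B⟩) ∧
    b = ⟨k + 1, k + ((r : ZMod m) + 3), Colour.P⟩)

/-- In the symmetric case `s = t` with an odd-sided polygon, the arrows whose
source lies in `τ(Π_{r,t,t}|_1)` and whose (unadjusted) target lies in the
first slice `Π_{r,t,t}|_1` additionally change colour and orientation. -/
def SeamTwist (r s t m : ℕ) (a b₀ : Diag m) : Prop :=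
  s = t ∧ Odd m ∧ a ∈ (tauD r s t) '' (PiSetAt r s t (1 : ZMod m)) ∧
    b₀ ∈ PiSetAt r s t (1 : ZMod m)

/-- The arrows of the quiver `Γ^{m}_{r,s,t}`: minimal clockwise rotations
between elements of `Π_{r,s,t}`, adjusted by `ρ` at the seam. -/
def ArrowD (r s t m : ℕ) (a b : Diag m) : Prop :=
  a ∈ PiSet r s t m ∧ b ∈ PiSet r s t m ∧
    ∃ b₀, Rot r a b₀ ∧
      ((SeamTwist r s t m a b₀ ∧ b = rho b₀) ∨ (¬ SeamTwist r s t m a b₀ ∧ b = b₀))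

/-- The vertices of the tree `T_{r,s,t}`: a central vertex together with three
legs having `r`, `s`, `t` vertices respectively. -/
inductive TVert (r s t : ℕ) : Type
  | center : TVert r s t
  | legA : Fin r → TVert r s t
  | legB : Fin s → TVert r s t
  | legC : Fin t → TVert r s t
deriving DecidableEq

/-- An orientation of the tree `T_{r,s,t}`: the `A`-leg points towards the
centre, the `B`- and `C`-legs point away from it. -/
def TArrow {r s t : ℕ} (x y : TVert r s t) : Prop :=
  (∃ k l : Fin r, (l : ℕ) + 1 = (k : ℕ) ∧ x = TVert.legA k ∧ y = TVert.legA l) ∨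
  (∃ k : Fin r, (k : ℕ) = 0 ∧ x = TVert.legA k ∧ y = TVert.center) ∨
  (∃ k : Fin s, (k : ℕ) = 0 ∧ x = TVert.center ∧ y = TVert.legB k) ∨
  (∃ k l : Fin s, (k : ℕ) + 1 = (l : ℕ) ∧ x = TVert.legB k ∧ y = TVert.legB l) ∨
  (∃ k : Fin t, (k : ℕ) = 0 ∧ x = TVert.center ∧ y = TVert.legC k) ∨
  (∃ k l : Fin t, (k : ℕ) + 1 = (l : ℕ) ∧ x = TVert.legC k ∧ y = TVert.legC l)

/-- The order-two graph automorphism of a symmetric tree `T_{r,t,t}`,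
exchanging its two legs of length `t`. -/
def treeRho {r t : ℕ} : TVert r t t → TVert r t t
  | TVert.center => TVert.center
  | TVert.legA k => TVert.legA k
  | TVert.legB k => TVert.legC k
  | TVert.legC k => TVert.legB k

/-- `treeRho` as a permutation. -/
def treeRhoPerm (r t : ℕ) : Equiv.Perm (TVert r t t) :=
  Function.Involutive.toPerm treeRho (by intro x; cases x <;> rfl)

/-- The translation of the repetitive quiver `ℤQ`: `τ(m,i) = (m-1,i)`. -/
def ZTau {V : Type} (x : ℤ × V) : ℤ × V := (x.1 - 1, x.2)

/-- The arrows of the repetitive quiver `ℤQ` of a quiver with arrow relation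
`A`: for each arrow `i → j` of `Q` there are arrows `(m,i) → (m,j)` and
`(m,j) → (m+1,i)`. -/
def ZArrow {V : Type} (A : V → V → Prop) (x y : ℤ × V) : Prop :=
  (y.1 = x.1 ∧ A x.2 y.2) ∨ (y.1 = x.1 + 1 ∧ A y.2 x.2)

/-- The automorphism `τ^{-m} σ` of `ℤQ` given by shifting `m` steps to the
right and applying the graph automorphism `σ` of `Q`. -/
def shiftPerm {V : Type} (m : ℕ) (σ : Equiv.Perm V) : Equiv.Perm (ℤ × V) :=
  (Equiv.addRight (m : ℤ)).prodCongr σ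

/-- `φ` exhibits the quiver `Γ^{m}_{r,s,t}` (with vertex set `PiSet r s t m`,
arrow relation `ArrowD` and translation `tauD`) as the quotient of the
repetitive quiver `ℤQ` (with arrow relation `ZArrow A` and translation `ZTau`)
by the cyclic group generated by the automorphism `g`, as stable translation
quivers: `φ` is surjective onto the vertex set, its fibres are exactly the
`g`-orbits, it commutes with the translations, and the arrows of
`Γ^{m}_{r,s,t}` correspond exactly to the `g`-orbits of arrows of `ℤQ`. -/
def IsQuotientIso (r s t m : ℕ) {V : Type} (A : V → V → Prop)
    (g : Equiv.Perm (ℤ × V)) (φ : ℤ × V → Diag m) : Prop :=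
  (∀ x, φ x ∈ PiSet r s t m) ∧
  (∀ d ∈ PiSet r s t m, ∃ x, φ x = d) ∧
  (∀ x y, φ x = φ y ↔ ∃ k : ℤ, (g ^ k) x = y) ∧
  (∀ x, φ (ZTau x) = tauD r s t (φ x)) ∧
  (∀ x y, ArrowD r s t m (φ x) (φ y) ↔
    ∃ y', (∃ k : ℤ, (g ^ k) y = y') ∧ ZArrow A x y')


/-! ### Auxiliary material for the proof -/

instance : Fintype (TVert 1 2 3) where
  elems := {TVert.center, TVert.legA 0, TVert.legB 0, TVert.legB 1,
            TVert.legC 0, TVert.legC 1, TVert.legC 2}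
  complete := by
    intro x
    cases x with
    | center => decide
    | legA k => fin_cases k <;> decide
    | legB k => fin_cases k <;> decide
    | legC k => fin_cases k <;> decide

instance (r : ℕ) (a b : Diag 10) : Decidable (Rot r a b) := by
  unfold Rot; infer_instance

instance {r s t : ℕ} (x y : TVert r s t) : Decidable (TArrow x y) := by
  unfold TArrow; infer_instance

/-- The slice map: assignment of a diagonal to each tree vertex, per slice. -/
def phi0 (i : ZMod 10) : TVert 1 2 3 → Diag 10
  | .center => ⟨i, i + 3, .P⟩
  | .legA _ => ⟨i, i + 2, .P⟩
  | .legB k => ⟨i, i + 4 + (k.val : ZMod 10), .R⟩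
  | .legC k => ⟨i + 4 + (k.val : ZMod 10), i, .B⟩

set_option maxHeartbeats 4000000 in
lemma rot_iff (i j : ZMod 10) (u v : TVert 1 2 3) :
    Rot 1 (phi0 i u) (phi0 j v) ↔ (j = i ∧ TArrow u v) ∨ (j = i + 1 ∧ TArrow v u) := by
  revert i j u v; decide

lemma phi0_inj_iff (i j : ZMod 10) (u v : TVert 1 2 3) :
    phi0 i u = phi0 j v ↔ (i = j ∧ u = v) := by
  revert i j u v; decide

lemma shift_phi0 (i : ZMod 10) (v : TVert 1 2 3) :
    shiftD (phi0 i v) = phi0 (i - 1) v := by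
  revert i v; decide

lemma mem_PiSetAt_iff (i : ZMod 10) (d : Diag 10) :
    d ∈ PiSetAt 1 2 3 i ↔
      d = ⟨i, i + 2, Colour.P⟩ ∨ d = ⟨i, i + 3, Colour.P⟩ ∨
      d = ⟨i, i + 4, Colour.R⟩ ∨ d = ⟨i, i + 5, Colour.R⟩ ∨
      d = ⟨i + 4, i, Colour.B⟩ ∨ d = ⟨i + 5, i, Colour.B⟩ ∨
      d = ⟨i + 6, i, Colour.B⟩ := by
  constructor
  · rintro (⟨k, hk1, hk2, rfl⟩ | ⟨k, hk1, hk2, rfl⟩ | ⟨k, hk1, hk2, rfl⟩) <;>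
      interval_cases k <;> norm_num
  · rintro (rfl | rfl | rfl | rfl | rfl | rfl | rfl)
    · exact Or.inl ⟨2, by norm_num⟩
    · exact Or.inl ⟨3, by norm_num⟩
    · exact Or.inr (Or.inl ⟨4, by norm_num⟩)
    · exact Or.inr (Or.inl ⟨5, by norm_num⟩)
    · exact Or.inr (Or.inr ⟨4, by norm_num⟩)
    · exact Or.inr (Or.inr ⟨5, by norm_num⟩)
    · exact Or.inr (Or.inr ⟨6, by norm_num⟩)

set_option maxHeartbeats 1000000 in
lemma phi0_mem (i : ZMod 10) (v : TVert 1 2 3) : phi0 i v ∈ PiSet 1 2 3 10 := by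
  refine Set.mem_iUnion.mpr ⟨i, (mem_PiSetAt_iff i _).mpr ?_⟩
  revert i v; decide

lemma tauD_eq_shiftD (d : Diag 10) : tauD 1 2 3 d = shiftD d := by
  rw [tauD, if_neg]; rintro ⟨h, -⟩; exact absurd h (by norm_num)

lemma not_seamTwist (a b : Diag 10) : ¬ SeamTwist 1 2 3 10 a b := by
  rintro ⟨h, -⟩; exact absurd h (by norm_num)

lemma arrowD_iff (a b : Diag 10) :
    ArrowD 1 2 3 10 a b ↔ a ∈ PiSet 1 2 3 10 ∧ b ∈ PiSet 1 2 3 10 ∧ Rot 1 a b := by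
  unfold ArrowD
  refine and_congr_right fun _ => and_congr_right fun _ => ⟨?_, ?_⟩
  · rintro ⟨b₀, hr, (⟨hs, -⟩ | ⟨-, rfl⟩)⟩
    · exact absurd hs (not_seamTwist _ _)
    · exact hr
  · exact fun hr => ⟨b, hr, Or.inr ⟨not_seamTwist _ _, rfl⟩⟩

lemma g_zpow (k : ℤ) (x : ℤ × TVert 1 2 3) :
    ((shiftPerm 10 (1 : Equiv.Perm (TVert 1 2 3))) ^ k) x = (x.1 + 10 * k, x.2) := by
  have hg : ∀ y : ℤ × TVert 1 2 3,
      (shiftPerm 10 (1 : Equiv.Perm (TVert 1 2 3))) y = (y.1 + 10, y.2) := fun y => rfl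
  have hg' : ∀ y : ℤ × TVert 1 2 3,
      (shiftPerm 10 (1 : Equiv.Perm (TVert 1 2 3)))⁻¹ y = (y.1 - 10, y.2) := by
    intro y
    have := hg ((shiftPerm 10 (1 : Equiv.Perm (TVert 1 2 3)))⁻¹ y)
    rw [← Equiv.Perm.mul_apply, mul_inv_cancel, Equiv.Perm.one_apply] at this
    rw [Prod.ext_iff] at this ⊢
    constructor
    · omega
    · exact this.2.symm
  induction k using Int.induction_on generalizing x with
  | zero => simp
  | succ n ih =>
      rw [zpow_add_one, Equiv.Perm.mul_apply, hg, ih]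
      simp only [Prod.mk.injEq, and_true]
      ring
  | pred n ih =>
      rw [zpow_sub_one, Equiv.Perm.mul_apply, hg', ih]
      simp only [Prod.mk.injEq, and_true]
      ring

lemma intCast_eq_iff (a b : ℤ) : (a : ZMod 10) = (b : ZMod 10) ↔ ∃ k : ℤ, a + 10 * k = b := by
  rw [ZMod.intCast_eq_intCast_iff, Int.modEq_iff_dvd]
  constructor
  · rintro ⟨k, hk⟩; exact ⟨k, by omega⟩
  · rintro ⟨k, hk⟩; exact ⟨k, by omega⟩

lemma phi0_vals (i : ZMod 10) :
    phi0 i (.legA 0) = ⟨i, i + 2, .P⟩ ∧ phi0 i .center = ⟨i, i + 3, .P⟩ ∧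
    phi0 i (.legB 0) = ⟨i, i + 4, .R⟩ ∧ phi0 i (.legB 1) = ⟨i, i + 5, .R⟩ ∧
    phi0 i (.legC 0) = ⟨i + 4, i, .B⟩ ∧ phi0 i (.legC 1) = ⟨i + 5, i, .B⟩ ∧
    phi0 i (.legC 2) = ⟨i + 6, i, .B⟩ := by
  revert i; decide
/-- Theorem 4.2 for `E₇`. The quiver `Γ^{10}_{1,2,3}` of
coloured oriented single and paired diagonals of a regular 10-gon is
isomorphic, as a stable translation quiver, to `ℤ E₇ / ⟨τ^{-10}⟩`, where
`E₇ = T_{1,2,3}`.  (This quotient is the AR-quiver of the cluster category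
`C_{E₇} = D^b(mod k E₇)/τ^{-1}Σ`, on which `Σ` acts as `τ^{-9}`.) -/
theorem gamma_10gon_iso_ZE7_quotient :
    ∃ φ : ℤ × TVert 1 2 3 → Diag 10,
      IsQuotientIso 1 2 3 10 TArrow
        (shiftPerm 10 (1 : Equiv.Perm (TVert 1 2 3))) φ := by
  refine ⟨fun x => phi0 (x.1 : ZMod 10) x.2, fun x => phi0_mem _ _, ?_, ?_, ?_, ?_⟩
  · -- surjectivity
    intro d hd
    obtain ⟨i, hi⟩ := Set.mem_iUnion.mp hd
    rw [mem_PiSetAt_iff] at hi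
    obtain ⟨n, rfl⟩ : ∃ n : ℤ, (n : ZMod 10) = i :=
      ⟨(i.val : ℤ), by push_cast; simp [ZMod.natCast_val, ZMod.cast_id]⟩
    obtain ⟨h1, h2, h3, h4, h5, h6, h7⟩ := phi0_vals ((n : ZMod 10))
    rcases hi with rfl | rfl | rfl | rfl | rfl | rfl | rfl
    exacts [⟨(n, .legA 0), h1⟩, ⟨(n, .center), h2⟩, ⟨(n, .legB 0), h3⟩,
      ⟨(n, .legB 1), h4⟩, ⟨(n, .legC 0), h5⟩, ⟨(n, .legC 1), h6⟩, ⟨(n, .legC 2), h7⟩]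
  · -- fibres
    rintro ⟨n, u⟩ ⟨n', v⟩
    simp only [g_zpow, Prod.mk.injEq]
    rw [phi0_inj_iff, intCast_eq_iff]
    constructor
    · rintro ⟨⟨k, hk⟩, rfl⟩; exact ⟨k, hk, rfl⟩
    · rintro ⟨k, hk, rfl⟩; exact ⟨⟨k, hk⟩, rfl⟩
  · -- translation
    rintro ⟨n, v⟩
    show phi0 _ _ = tauD 1 2 3 _
    rw [tauD_eq_shiftD, shift_phi0]
    congr 1
    show ((n - 1 : ℤ) : ZMod 10) = (n : ZMod 10) - 1
    push_cast
    ring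
  · -- arrows
    rintro ⟨n, u⟩ ⟨n', v⟩
    rw [arrowD_iff]
    simp only [phi0_mem, true_and]
    rw [rot_iff]
    constructor
    · rintro (⟨h, ht⟩ | ⟨h, ht⟩)
      · obtain ⟨k, hk⟩ := (intCast_eq_iff n' n).mp h
        exact ⟨(n' + 10 * k, v), ⟨k, by rw [g_zpow]⟩, Or.inl ⟨hk, ht⟩⟩
      · have h' : ((n' : ℤ) : ZMod 10) = ((n + 1 : ℤ) : ZMod 10) := by push_cast; rw [h]
        obtain ⟨k, hk⟩ := (intCast_eq_iff n' (n + 1)).mp h'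
        exact ⟨(n' + 10 * k, v), ⟨k, by rw [g_zpow]⟩, Or.inr ⟨hk, ht⟩⟩
    · rintro ⟨y', ⟨k, rfl⟩, h⟩
      rw [g_zpow] at h
      rcases h with ⟨h1, ht⟩ | ⟨h1, ht⟩
      · exact Or.inl ⟨(intCast_eq_iff n' n).mpr ⟨k, h1⟩, ht⟩
      · refine Or.inr ⟨?_, ht⟩
        have := (intCast_eq_iff n' (n + 1)).mpr ⟨k, h1⟩
        push_cast at this
        exact this
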